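/- Let P = (P_{ij}) be an N×N matrix of orthogonal projections in M_K(ℂ) which is 'magic': ∑_j P_{ij} = Id = ∑_i P_{ij} for all rows and columns, and suppose each P_{ij} has rank at most 1, with all P_{ij} pairwise commuting. Then there exist rank-one projections P_1,...,P_K summing to the identity and a sparse Latin square L with N rows/columns and K symbols such that P_{ij} = P_{L_{ij}} (with the convention that the symbol * gives the zero projection). -/

import Mathlib

open Matrix

/-- A sparse Latin square of size `N` with symbols `Fin K`: every symbol appears
exactly once in each row and exactly once in each column. -/
def IsSparseLatin {N K : ℕ} (L : Fin N → Fin N → Option (Fin K)) : Prop :=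
  (∀ i : Fin N, ∀ x : Fin K, ∃! j : Fin N, L i j = some x) ∧
  (∀ j : Fin N, ∀ x : Fin K, ∃! i : Fin N, L i j = some x)

namespace Stmt16Aux

open scoped ComplexOrder

variable {n : Type*} [Fintype n] [DecidableEq n]

/-- Eigenvalues of a hermitian idempotent are 0 or 1. -/
lemma eig01 {A : Matrix n n ℂ} (h1 : A * A = A) (hA : A.IsHermitian) (i : n) :
    hA.eigenvalues i = 0 ∨ hA.eigenvalues i = 1 := by
  have hmv := hA.mulVec_eigenvectorBasis i
  set lam := hA.eigenvalues i with hlam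
  set v := ⇑(hA.eigenvectorBasis i) with hv
  have h2 : (lam * lam) • v = lam • v := by
    calc (lam * lam) • v = lam • (lam • v) := (smul_smul lam lam v).symm
      _ = lam • (A *ᵥ v) := by rw [hmv]
      _ = A *ᵥ (lam • v) := (mulVec_smul A lam v).symm
      _ = A *ᵥ (A *ᵥ v) := by rw [hmv]
      _ = (A * A) *ᵥ v := by rw [mulVec_mulVec]
      _ = A *ᵥ v := by rw [h1]
      _ = lam • v := hmv
  have h3 : (lam * lam - lam) • v = 0 := by rw [sub_smul, h2, sub_self]
  rcases smul_eq_zero.mp h3 with h | h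
  · have h4 : lam * (lam - 1) = 0 := by ring_nf; ring_nf at h; linarith
    rcases mul_eq_zero.mp h4 with h5 | h5
    · exact Or.inl h5
    · exact Or.inr (by linarith [sub_eq_zero.mp h5])
  · exfalso
    apply hA.eigenvectorBasis.orthonormal.ne_zero i
    ext j
    exact congrFun h j

/-- The trace of a hermitian idempotent complex matrix equals its rank. -/
lemma trace_eq_rank {A : Matrix n n ℂ} (h1 : A * A = A) (h2 : Aᴴ = A) :
    A.trace = (A.rank : ℂ) := by
  have hA : A.IsHermitian := h2
  have ht : A.trace = ∑ i, (hA.eigenvalues i : ℂ) := by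
    nth_rewrite 1 [hA.spectral_theorem]
    rw [Unitary.conjStarAlgAut_apply, Matrix.trace_mul_cycle, Unitary.coe_star_mul_self, Matrix.one_mul,
      Matrix.trace_diagonal]
    rfl
  rw [ht, hA.rank_eq_card_non_zero_eigs, Fintype.card_subtype]
  have hfil : ∑ i, (hA.eigenvalues i : ℂ) =
      ∑ i ∈ Finset.univ.filter (fun i => hA.eigenvalues i ≠ 0), (hA.eigenvalues i : ℂ) := by
    rw [Finset.sum_filter_of_ne]
    intro i _ hne
    exact fun h0 => hne (by rw [h0]; simp)
  rw [hfil]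
  rw [Finset.sum_congr rfl (fun i hi => ?_), Finset.sum_const, nsmul_eq_mul, mul_one]
  have := (Finset.mem_filter.mp hi).2
  rcases eig01 h1 hA i with h | h
  · exact absurd h this
  · rw [h]; norm_num

/-- A hermitian idempotent with zero trace is zero. -/
lemma eq_zero_of_trace_eq_zero {A : Matrix n n ℂ} (h1 : A * A = A) (h2 : Aᴴ = A)
    (ht : A.trace = 0) : A = 0 := by
  have key : Aᴴ * A = A := by rw [h2, h1]
  have h3 : ∑ i, dotProduct (star fun j => A j i) (fun j => A j i) = 0 := by
    have h4 : (Aᴴ * A).trace = 0 := by rw [key, ht]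
    simpa [Matrix.trace, Matrix.diag, Matrix.mul_apply, dotProduct,
      Matrix.conjTranspose_apply] using h4
  have h5 := (Finset.sum_eq_zero_iff_of_nonneg
    (fun i _ => dotProduct_star_self_nonneg (fun j => A j i))).mp h3
  ext i j
  have h6 := dotProduct_star_self_eq_zero.mp (h5 j (Finset.mem_univ j))
  exact congrFun h6 i

lemma eq_zero_of_rank_eq_zero {A : Matrix n n ℂ} (h1 : A * A = A) (h2 : Aᴴ = A)
    (hr : A.rank = 0) : A = 0 :=
  eq_zero_of_trace_eq_zero h1 h2 (by rw [trace_eq_rank h1 h2, hr]; simp)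

lemma mul_isProj {A B : Matrix n n ℂ} (hA1 : A * A = A) (hA2 : Aᴴ = A)
    (hB1 : B * B = B) (hB2 : Bᴴ = B) (hc : A * B = B * A) :
    (A * B) * (A * B) = A * B ∧ (A * B)ᴴ = A * B := by
  constructor
  · calc (A * B) * (A * B) = A * (B * A) * B := by noncomm_ring
      _ = A * (A * B) * B := by rw [hc]
      _ = (A * A) * (B * B) := by noncomm_ring
      _ = A * B := by rw [hA1, hB1]
  · rw [conjTranspose_mul, hA2, hB2, hc]

lemma diff_isProj {A B : Matrix n n ℂ} (hA1 : A * A = A) (hA2 : Aᴴ = A)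
    (hB1 : B * B = B) (hB2 : Bᴴ = B) (hc : A * B = B * A) :
    (A - A * B) * (A - A * B) = A - A * B ∧ (A - A * B)ᴴ = A - A * B := by
  have hABA : (A * B) * A = A * B := by
    rw [hc, Matrix.mul_assoc, hA1]
  have hAAB : A * (A * B) = A * B := by rw [← Matrix.mul_assoc, hA1]
  constructor
  · have : (A - A * B) * (A - A * B)
        = A * A - A * (A * B) - ((A * B) * A - (A * B) * (A * B)) := by noncomm_ring
    rw [this, hA1, hAAB, hABA, (mul_isProj hA1 hA2 hB1 hB2 hc).1]
    abel
  · rw [conjTranspose_sub, hA2, (mul_isProj hA1 hA2 hB1 hB2 hc).2]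

/-- Two commuting rank-≤1 projections whose product has rank one are equal. -/
lemma eq_of_mul_rank_one {A B : Matrix n n ℂ} (hA1 : A * A = A) (hA2 : Aᴴ = A)
    (hB1 : B * B = B) (hB2 : Bᴴ = B) (hc : A * B = B * A)
    (hAr : A.rank ≤ 1) (hBr : B.rank ≤ 1) (h : (A * B).rank = 1) : A = B := by
  obtain ⟨hm1, hm2⟩ := mul_isProj hA1 hA2 hB1 hB2 hc
  have hAr' : A.rank = 1 := le_antisymm hAr (h ▸ rank_mul_le_left A B)
  have hBr' : B.rank = 1 := le_antisymm hBr (h ▸ rank_mul_le_right A B)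
  have hA0 : A - A * B = 0 := by
    obtain ⟨hd1, hd2⟩ := diff_isProj hA1 hA2 hB1 hB2 hc
    apply eq_zero_of_trace_eq_zero hd1 hd2
    rw [trace_sub, trace_eq_rank hA1 hA2, trace_eq_rank hm1 hm2, hAr', h, sub_self]
  have hB0 : B - B * A = 0 := by
    obtain ⟨hd1, hd2⟩ := diff_isProj hB1 hB2 hA1 hA2 hc.symm
    apply eq_zero_of_trace_eq_zero hd1 hd2
    rw [trace_sub, trace_eq_rank hB1 hB2, hBr']
    have : (B * A).trace = ((B * A).rank : ℂ) := by
      obtain ⟨hm1', hm2'⟩ := mul_isProj hB1 hB2 hA1 hA2 hc.symm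
      exact trace_eq_rank hm1' hm2'
    rw [this, ← hc, h, sub_self]
  calc A = A * B := by rw [← sub_eq_zero]; exact hA0
    _ = B * A := hc
    _ = B := by rw [← sub_eq_zero, ← neg_sub, hB0, neg_zero]

/-- A rank-one projection commuting with a family of rank-≤1 projections summing to
the identity equals one of them. -/
lemma exists_eq {ι : Type*} [Fintype ι] (R : ι → Matrix n n ℂ)
    (hRp : ∀ j, R j * R j = R j) (hRh : ∀ j, (R j)ᴴ = R j)
    (hRr : ∀ j, (R j).rank ≤ 1) (hsum : ∑ j, R j = 1)
    (p : Matrix n n ℂ) (hp1 : p * p = p) (hp2 : pᴴ = p) (hpr : p.rank = 1)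
    (hc : ∀ j, p * R j = R j * p) : ∃ j, p = R j := by
  have hdecomp : p = ∑ j, p * R j := by rw [← Finset.mul_sum, hsum, mul_one]
  have htr : ((1 : ℕ) : ℂ) = ∑ j, ((p * R j).rank : ℂ) := by
    calc ((1 : ℕ) : ℂ) = (p.rank : ℂ) := by rw [hpr]
      _ = p.trace := (trace_eq_rank hp1 hp2).symm
      _ = (∑ j, p * R j).trace := by rw [← hdecomp]
      _ = ∑ j, (p * R j).trace := trace_sum _ _
      _ = ∑ j, ((p * R j).rank : ℂ) := Finset.sum_congr rfl (fun j _ =>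
          trace_eq_rank (mul_isProj hp1 hp2 (hRp j) (hRh j) (hc j)).1
            (mul_isProj hp1 hp2 (hRp j) (hRh j) (hc j)).2)
  have hnat : 1 = ∑ j, (p * R j).rank := by exact_mod_cast htr
  have hex : ∃ j, (p * R j).rank ≠ 0 := by
    by_contra hcon
    push_neg at hcon
    simp [hcon] at hnat
  obtain ⟨j, hj⟩ := hex
  have hj1 : (p * R j).rank = 1 :=
    le_antisymm ((rank_mul_le_left p (R j)).trans hpr.le) (Nat.one_le_iff_ne_zero.mpr hj)
  exact ⟨j, eq_of_mul_rank_one hp1 hp2 (hRp j) (hRh j) (hc j) hpr.le (hRr j) hj1⟩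

/-- Projections summing to the identity and pairwise commuting are pairwise orthogonal. -/
lemma ortho {ι : Type*} [Fintype ι] [DecidableEq ι] (R : ι → Matrix n n ℂ)
    (hRp : ∀ j, R j * R j = R j) (hRh : ∀ j, (R j)ᴴ = R j)
    (hsum : ∑ j, R j = 1) (hc : ∀ j k, R j * R k = R k * R j) :
    ∀ j k, j ≠ k → R j * R k = 0 := by
  intro j k hjk
  have hdecomp : R j = ∑ l, R j * R l := by rw [← Finset.mul_sum, hsum, mul_one]
  have h0 : ∑ l ∈ Finset.univ.erase j, R j * R l = 0 := by
    have h := hdecomp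
    rw [← Finset.add_sum_erase _ _ (Finset.mem_univ j), hRp j, left_eq_add] at h
    exact h
  have hproj : ∀ l, (R j * R l) * (R j * R l) = R j * R l ∧ (R j * R l)ᴴ = R j * R l :=
    fun l => mul_isProj (hRp j) (hRh j) (hRp l) (hRh l) (hc j l)
  have htr : (0 : ℂ) = ∑ l ∈ Finset.univ.erase j, ((R j * R l).rank : ℂ) := by
    calc (0 : ℂ) = (0 : Matrix n n ℂ).trace := by simp
      _ = (∑ l ∈ Finset.univ.erase j, R j * R l).trace := by rw [h0]
      _ = ∑ l ∈ Finset.univ.erase j, (R j * R l).trace := trace_sum _ _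
      _ = _ := Finset.sum_congr rfl (fun l _ => trace_eq_rank (hproj l).1 (hproj l).2)
  have hnat : ∑ l ∈ Finset.univ.erase j, (R j * R l).rank = 0 := by exact_mod_cast htr.symm
  have hk0 : (R j * R k).rank = 0 :=
    (Finset.sum_eq_zero_iff.mp hnat) k (Finset.mem_erase.mpr ⟨fun h => hjk h.symm, Finset.mem_univ k⟩)
  exact eq_zero_of_rank_eq_zero (hproj k).1 (hproj k).2 hk0

end Stmt16Aux

open Stmt16Aux in
theorem stmt_16 {N K : ℕ} (P : Fin N → Fin N → Matrix (Fin K) (Fin K) ℂ)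
    (hproj : ∀ i j, P i j * P i j = P i j ∧ (P i j)ᴴ = P i j)
    (hrank : ∀ i j, (P i j).rank ≤ 1)
    (hrow : ∀ i, ∑ j, P i j = 1) (hcol : ∀ j, ∑ i, P i j = 1)
    (hcomm : ∀ i j k l, P i j * P k l = P k l * P i j) :
    ∃ (Q : Fin K → Matrix (Fin K) (Fin K) ℂ) (L : Fin N → Fin N → Option (Fin K)),
      (∀ x, Q x * Q x = Q x ∧ (Q x)ᴴ = Q x ∧ (Q x).rank = 1) ∧
      (∑ x, Q x = 1) ∧
      IsSparseLatin L ∧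
      (∀ i j, P i j = (L i j).elim 0 (fun x => Q x)) := by
  classical
  rcases Nat.eq_zero_or_pos N with hN | hN
  · -- No rows: use the diagonal rank-one projections.
    subst hN
    refine ⟨fun x => Matrix.diagonal (fun y => if y = x then 1 else 0), fun i => i.elim0,
      fun x => ⟨?_, ?_, ?_⟩, ?_, ⟨fun i => i.elim0, fun j => j.elim0⟩, fun i => i.elim0⟩
    · show (diagonal fun y => if y = x then (1:ℂ) else 0) * (diagonal fun y => if y = x then 1 else 0)
          = diagonal fun y => if y = x then 1 else 0
      rw [diagonal_mul_diagonal]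
      refine congrArg Matrix.diagonal (funext fun y => ?_)
      by_cases h : y = x <;> simp [h]
    · show (diagonal fun y => if y = x then (1:ℂ) else 0)ᴴ = diagonal fun y => if y = x then 1 else 0
      rw [diagonal_conjTranspose]
      refine congrArg Matrix.diagonal (funext fun y => ?_)
      by_cases h : y = x <;> simp [h]
    · rw [rank_diagonal, Fintype.card_subtype]
      have hfil : Finset.univ.filter (fun y => (if y = x then (1:ℂ) else 0) ≠ 0) = {x} := by
        ext y
        by_cases h : y = x <;> simp [h]
      rw [hfil, Finset.card_singleton]
    · ext y z
      rw [Matrix.sum_apply]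
      by_cases h : y = z
      · subst h
        simp only [Matrix.diagonal_apply_eq, Matrix.one_apply_eq]
        rw [Finset.sum_ite_eq]
        simp
      · rw [Finset.sum_congr rfl (fun x _ => Matrix.diagonal_apply_ne _ h), Finset.sum_const,
          smul_zero, Matrix.one_apply_ne h]
  · -- Main case: build Q from row 0.
    obtain ⟨i0, _⟩ : ∃ i0 : Fin N, True := ⟨⟨0, hN⟩, trivial⟩
    have hP1 : ∀ i j, P i j * P i j = P i j := fun i j => (hproj i j).1
    have hP2 : ∀ i j, (P i j)ᴴ = P i j := fun i j => (hproj i j).2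
    have hrank1 : ∀ i j, P i j ≠ 0 → (P i j).rank = 1 := by
      intro i j h
      rcases Nat.lt_or_ge 0 ((P i j).rank) with h' | h'
      · exact le_antisymm (hrank i j) h'
      · exact absurd (eq_zero_of_rank_eq_zero (hP1 i j) (hP2 i j) (Nat.le_zero.mp h')) h
    set T : Finset (Fin N) := Finset.univ.filter (fun j => P i0 j ≠ 0) with hT
    have hcard : T.card = K := by
      have htr : ((K : ℕ) : ℂ) = ∑ j, ((P i0 j).rank : ℂ) := by
        calc ((K : ℕ) : ℂ) = (Fintype.card (Fin K) : ℂ) := by rw [Fintype.card_fin]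
          _ = (1 : Matrix (Fin K) (Fin K) ℂ).trace := (trace_one).symm
          _ = (∑ j, P i0 j).trace := by rw [hrow i0]
          _ = ∑ j, (P i0 j).trace := trace_sum _ _
          _ = ∑ j, ((P i0 j).rank : ℂ) := Finset.sum_congr rfl
              (fun j _ => trace_eq_rank (hP1 i0 j) (hP2 i0 j))
      have hnat : K = ∑ j, (P i0 j).rank := by exact_mod_cast htr
      have hite : ∀ j, (P i0 j).rank = if P i0 j ≠ 0 then 1 else 0 := by
        intro j
        by_cases h : P i0 j = 0
        · simp [h, Matrix.rank_zero]
        · simp [h, hrank1 i0 j h]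
      calc T.card = ∑ j, if P i0 j ≠ 0 then 1 else 0 := Finset.card_filter _ _
        _ = ∑ j, (P i0 j).rank := Finset.sum_congr rfl (fun j _ => (hite j).symm)
        _ = K := hnat.symm
    set e : Fin K ≃ ↥T := (Finset.equivFinOfCardEq hcard).symm with he
    set Q : Fin K → Matrix (Fin K) (Fin K) ℂ := fun x => P i0 ((e x : Fin N)) with hQ
    have hQ1 : ∀ x, Q x * Q x = Q x := fun x => hP1 i0 _
    have hQ2 : ∀ x, (Q x)ᴴ = Q x := fun x => hP2 i0 _
    have hQr : ∀ x, (Q x).rank = 1 := by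
      intro x
      apply hrank1 i0
      exact (Finset.mem_filter.mp (e x).2).2
    have hQsum : ∑ x, Q x = 1 := by
      calc ∑ x, Q x = ∑ t : ↥T, P i0 ↑t := Equiv.sum_comp e (fun t : ↥T => P i0 ↑t)
        _ = ∑ j ∈ T, P i0 j := Finset.sum_coe_sort T (fun j => P i0 j)
        _ = ∑ j, P i0 j := Finset.sum_filter_ne_zero _
        _ = 1 := hrow i0
    have hQcommP : ∀ x i j, Q x * P i j = P i j * Q x := fun x i j => hcomm i0 _ i j
    have hQne0 : ∀ x, Q x ≠ 0 := by
      intro x h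
      have := hQr x
      rw [h, Matrix.rank_zero] at this
      exact zero_ne_one this
    have hQinj : Function.Injective Q := by
      intro x y hxy
      by_contra hne
      have h0 := ortho Q hQ1 hQ2 hQsum (fun a b => hcomm i0 _ i0 _) x y hne
      rw [hxy, hQ1 y] at h0
      exact hQne0 y h0
    -- labeling
    have hlabel : ∀ i j, ∃ o : Option (Fin K), P i j = o.elim 0 (fun x => Q x) := by
      intro i j
      by_cases h : P i j = 0
      · exact ⟨none, by simpa using h⟩
      · obtain ⟨x, hx⟩ := exists_eq Q hQ1 hQ2 (fun x => (hQr x).le) hQsum (P i j)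
          (hP1 i j) (hP2 i j) (hrank1 i j h) (fun x => hcomm i j i0 _)
        exact ⟨some x, by simpa using hx⟩
    choose L hL using hlabel
    have hLval : ∀ i j x, L i j = some x ↔ P i j = Q x := by
      intro i j x
      constructor
      · intro h
        have := hL i j
        rw [h] at this
        simpa using this
      · intro h
        have hLij := hL i j
        cases hcase : L i j with
        | none =>
          rw [hcase] at hLij
          simp at hLij
          rw [hLij] at h
          exact absurd h.symm (hQne0 x)
        | some y =>
          rw [hcase] at hLij
          simp at hLij
          rw [h] at hLij
          rw [hQinj hLij.symm]
    refine ⟨Q, L, fun x => ⟨hQ1 x, hQ2 x, hQr x⟩, hQsum, ⟨?_, ?_⟩, hL⟩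
    · -- rows
      intro i x
      obtain ⟨j, hj⟩ := exists_eq (fun j => P i j) (hP1 i) (hP2 i) (hrank i) (hrow i)
        (Q x) (hQ1 x) (hQ2 x) (hQr x) (fun j => hQcommP x i j)
      have hj' : Q x = P i j := hj
      refine ⟨j, (hLval i j x).mpr hj'.symm, ?_⟩
      intro j'' hj''
      have hj''P := (hLval i j'' x).mp hj''
      by_contra hne
      have h0 : P i j'' * P i j = 0 := ortho (fun j => P i j) (hP1 i) (hP2 i) (hrow i)
        (fun a b => hcomm i a i b) j'' j hne
      rw [hj''P, ← hj', hQ1 x] at h0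
      exact hQne0 x h0
    · -- columns
      intro j x
      obtain ⟨i, hi⟩ := exists_eq (fun i => P i j) (fun i => hP1 i j) (fun i => hP2 i j)
        (fun i => hrank i j) (hcol j) (Q x) (hQ1 x) (hQ2 x) (hQr x)
        (fun i => hQcommP x i j)
      have hi' : Q x = P i j := hi
      refine ⟨i, (hLval i j x).mpr hi'.symm, ?_⟩
      intro i'' hi''
      have hi''P := (hLval i'' j x).mp hi''
      by_contra hne
      have h0 : P i'' j * P i j = 0 := ortho (fun i => P i j) (fun i => hP1 i j)
        (fun i => hP2 i j) (hcol j) (fun a b => hcomm a j b j) i'' i hne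
      rw [hi''P, ← hi', hQ1 x] at h0
      exact hQne0 x h0
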